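/- Gauss's identity: (q²;q²)_∞ / (q;q²)_∞ = Σ_{j≥0} q^{j(j+1)/2}, i.e., the generating function for partitions into parts each appearing an even number of times divided appropriately equals the sum of q raised to triangular numbers. -/

import Mathlib

namespace GaussAux

open Finset

/-- weight `w q m j = ∏_{i<j} (1-q^(m-i))/(1-q^(m+2+i))` -/
noncomputable def w (q : ℝ) (m j : ℕ) : ℝ :=
  ∏ i ∈ Finset.range j, (1 - q ^ (m - i)) / (1 - q ^ (m + 2 + i))

def T (j : ℕ) : ℕ := j * (j + 1) / 2

noncomputable def A (q : ℝ) (m : ℕ) : ℝ :=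
  ∑ j ∈ Finset.range (m + 1), q ^ T j * w q m j

lemma T_succ (j : ℕ) : T (j + 1) = T j + (j + 1) := by
  unfold T
  have h : (j + 1) * (j + 1 + 1) = j * (j + 1) + 2 * (j + 1) := by ring
  omega

lemma one_sub_pow_pos {q : ℝ} (hq : |q| < 1) (k : ℕ) (hk : k ≠ 0) :
    0 < 1 - q ^ k := by
  have h1 : |q ^ k| < 1 := by
    rw [abs_pow]
    calc |q| ^ k ≤ |q| ^ 1 := pow_le_pow_of_le_one (abs_nonneg q) hq.le (Nat.one_le_iff_ne_zero.2 hk)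
    _ = |q| := pow_one _
    _ < 1 := hq
  have := abs_lt.1 h1
  linarith [this.2]

lemma one_sub_pow_ne {q : ℝ} (hq : |q| < 1) (k : ℕ) (hk : k ≠ 0) :
    1 - q ^ k ≠ 0 := ne_of_gt (one_sub_pow_pos hq k hk)

lemma w_zero (q : ℝ) (m : ℕ) : w q m 0 = 1 := by simp [w]

lemma w_succ (q : ℝ) (m j : ℕ) :
    w q m (j + 1) = w q m j * ((1 - q ^ (m - j)) / (1 - q ^ (m + 2 + j))) :=
  Finset.prod_range_succ _ _

lemma w_top (q : ℝ) (m : ℕ) : w q m (m + 1) = 0 := by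
  rw [w_succ]
  simp

/-- contiguous relation between `w q m` and `w q (m+1)`. -/
lemma w_contig {q : ℝ} (hq : |q| < 1) (m : ℕ) :
    ∀ j, j ≤ m + 1 →
      w q m j * ((1 - q ^ (m + 1)) * (1 - q ^ (m + 2))) =
      w q (m + 1) j * ((1 - q ^ (m + 1 - j)) * (1 - q ^ (m + 2 + j))) := by
  intro j
  induction j with
  | zero => intro _; rw [w_zero, w_zero]; norm_num
  | succ j ih =>
    intro hj
    have key := ih (by omega)
    have e1 : m + 1 - (j + 1) = m - j := by omega
    have e2 : m + 1 + 2 + j = m + 3 + j := by omega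
    have e3 : m + 2 + (j + 1) = m + 3 + j := by omega
    rw [w_succ, w_succ, e1, e2, e3]
    have h2 : (1 - q ^ (m + 2 + j)) ≠ 0 := one_sub_pow_ne hq _ (by omega)
    have h3 : (1 - q ^ (m + 3 + j)) ≠ 0 := one_sub_pow_ne hq _ (by omega)
    field_simp
    linear_combination (1 - q ^ (m - j)) * key


noncomputable def g (q : ℝ) (m J : ℕ) : ℝ :=
  q ^ T J * w q m J * (q ^ (m - J) * (1 - q ^ J) * (1 - q ^ (m + 1 + J)))

lemma g_zero (q : ℝ) (m : ℕ) : g q m 0 = 0 := by simp [g]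

lemma g_top (q : ℝ) (m : ℕ) : g q (m + 1) (m + 2) = 0 := by
  unfold g
  rw [w_top]
  ring

lemma key {q : ℝ} (hq : |q| < 1) (m J : ℕ) (hJ : J ≤ m + 1) :
    (1 - q ^ (m + 1)) * (1 - q ^ (2 * m + 3)) * (q ^ T J * w q (m + 1) J)
      - (1 + q ^ (m + 1)) * (1 - q ^ (m + 2)) * (1 - q ^ (m + 1)) * (q ^ T J * w q m J)
    = g q (m + 1) J - g q (m + 1) (J + 1) := by
  rcases Nat.lt_or_ge J (m + 1) with hJm | hJm
  · -- J ≤ m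
    have hJm' : J ≤ m := by omega
    have contig := w_contig hq m J hJ
    unfold g
    rw [T_succ, w_succ]
    have h3 : (1 - q ^ (m + 1 + 2 + J)) ≠ 0 := one_sub_pow_ne hq _ (by omega)
    -- rewrite all exponents in terms of atoms  x := q^J, e := q^(m-J), q
    have E : ∀ a b c : ℕ, a + b * J + c * (m - J) = a + b * J + c * (m - J) := fun _ _ _ => rfl
    have e1 : q ^ (m + 1) = q * q ^ (m - J) * q ^ J := by
      rw [mul_assoc, ← pow_add, ← pow_succ']; congr 1; omega
    have e2 : q ^ (2 * m + 3) = q ^ 3 * (q ^ (m - J)) ^ 2 * (q ^ J) ^ 2 := by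
      rw [← pow_mul, ← pow_mul, ← pow_add, ← pow_add]; congr 1; omega
    have e3 : q ^ (m + 2) = q ^ 2 * q ^ (m - J) * q ^ J := by
      rw [mul_assoc, ← pow_add, ← pow_add]; congr 1; omega
    have e4 : q ^ (m + 1 - J) = q * q ^ (m - J) := by
      rw [← pow_succ']; congr 1; omega
    have e5 : q ^ (m + 1 + 1 + J) = q ^ 2 * q ^ (m - J) * (q ^ J) ^ 2 := by
      rw [← pow_mul, mul_assoc, ← pow_add, ← pow_add]; congr 1; omega
    have e6 : q ^ (m + 1 + 2 + J) = q ^ 3 * q ^ (m - J) * (q ^ J) ^ 2 := by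
      rw [← pow_mul, mul_assoc, ← pow_add, ← pow_add]; congr 1; omega
    have e7 : q ^ (m + 1 - (J + 1)) = q ^ (m - J) := by congr 1; omega
    have e8 : q ^ (m + 1 + 1 + (J + 1)) = q ^ 3 * q ^ (m - J) * (q ^ J) ^ 2 := by
      rw [← pow_mul, mul_assoc, ← pow_add, ← pow_add]; congr 1; omega
    have e9 : q ^ (T J + (J + 1)) = q ^ T J * (q ^ J * q) := by
      rw [pow_add, pow_succ]
    have e10 : q ^ (J + 1) = q ^ J * q := by rw [← pow_succ]
    have e11 : q ^ (m + 2 + J) = q ^ 2 * q ^ (m - J) * (q ^ J) ^ 2 := by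
      rw [← pow_mul, mul_assoc, ← pow_add, ← pow_add]; congr 1; omega
    rw [e1, e3, e4, e11] at contig
    rw [e6] at h3
    rw [e1, e2, e3, e4, e5, e6, e7, e8, e9, e10]
    field_simp
    linear_combination (-(1 + q * q ^ (m - J) * q ^ J)) * q ^ T J * contig
  · -- J = m + 1
    have hJ1 : J = m + 1 := by omega
    subst hJ1
    unfold g
    rw [w_top, w_top]
    have : m + 1 - (m + 1) = 0 := by omega
    rw [this]
    have h2 : q ^ (m + 1 + 1 + (m + 1)) = q ^ (2 * m + 3) := by congr 1; omega
    rw [h2]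
    ring


lemma A_rec {q : ℝ} (hq : |q| < 1) (m : ℕ) :
    (1 - q ^ (2 * m + 3)) * A q (m + 1) = (1 + q ^ (m + 1)) * (1 - q ^ (m + 2)) * A q m := by
  have h1 : (1 - q ^ (m + 1)) ≠ 0 := one_sub_pow_ne hq _ (by omega)
  have hsum : ∑ J ∈ Finset.range (m + 2),
      ((1 - q ^ (m + 1)) * (1 - q ^ (2 * m + 3)) * (q ^ T J * w q (m + 1) J)
        - (1 + q ^ (m + 1)) * (1 - q ^ (m + 2)) * (1 - q ^ (m + 1)) * (q ^ T J * w q m J)) = 0 := by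
    calc ∑ J ∈ Finset.range (m + 2),
        ((1 - q ^ (m + 1)) * (1 - q ^ (2 * m + 3)) * (q ^ T J * w q (m + 1) J)
          - (1 + q ^ (m + 1)) * (1 - q ^ (m + 2)) * (1 - q ^ (m + 1)) * (q ^ T J * w q m J))
        = ∑ J ∈ Finset.range (m + 2), (g q (m + 1) J - g q (m + 1) (J + 1)) := by
          refine Finset.sum_congr rfl (fun J hJ => ?_)
          exact key hq m J (by have := Finset.mem_range.1 hJ; omega)
      _ = g q (m + 1) 0 - g q (m + 1) (m + 2) := Finset.sum_range_sub' (g q (m + 1)) (m + 2)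
      _ = 0 := by rw [g_zero, g_top]; ring
  have hA1 : A q (m + 1) = ∑ J ∈ Finset.range (m + 2), q ^ T J * w q (m + 1) J := rfl
  have hAm : ∑ J ∈ Finset.range (m + 2), q ^ T J * w q m J = A q m := by
    have : m + 2 = (m + 1) + 1 := rfl
    rw [this, Finset.sum_range_succ, w_top]
    simp [A]
  have key2 : (1 - q ^ (m + 1)) * (1 - q ^ (2 * m + 3)) *
        (∑ J ∈ Finset.range (m + 2), q ^ T J * w q (m + 1) J)
      = (1 + q ^ (m + 1)) * (1 - q ^ (m + 2)) * (1 - q ^ (m + 1)) *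
        (∑ J ∈ Finset.range (m + 2), q ^ T J * w q m J) := by
    rw [Finset.mul_sum, Finset.mul_sum, ← sub_eq_zero, ← Finset.sum_sub_distrib]
    exact hsum
  rw [← hA1, hAm] at key2
  apply mul_left_cancel₀ h1
  linear_combination key2

noncomputable def Dp (q : ℝ) (k : ℕ) : ℝ := ∏ i ∈ Finset.range k, (1 - q ^ (2 * i + 1))

noncomputable def Np (q : ℝ) (k : ℕ) : ℝ := ∏ i ∈ Finset.range k, (1 - q ^ (2 * i + 2))

lemma A_closed {q : ℝ} (hq : |q| < 1) :
    ∀ m, A q m * Dp q (m + 1) = (1 - q ^ (m + 1)) * Np q m := by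
  intro m
  induction m with
  | zero => simp [A, w_zero, T, Dp, Np]
  | succ m ih =>
    have hrec := A_rec hq m
    have hD : Dp q (m + 2) = Dp q (m + 1) * (1 - q ^ (2 * m + 3)) := by
      unfold Dp
      have h2 : m + 2 = (m + 1) + 1 := rfl
      rw [h2, Finset.prod_range_succ, show 2 * (m + 1) + 1 = 2 * m + 3 from by ring]
    have hN : Np q (m + 1) = Np q m * (1 - q ^ (2 * m + 2)) := by
      unfold Np
      rw [Finset.prod_range_succ, show 2 * m + 2 = 2 * m + 2 from rfl]
    have hsq : (1 + q ^ (m + 1)) * (1 - q ^ (m + 1)) = 1 - q ^ (2 * m + 2) := by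
      have h3 : q ^ (2 * m + 2) = q ^ (m + 1) * q ^ (m + 1) := by
        rw [← pow_add]; congr 1; omega
      rw [h3]; ring
    rw [hD, hN]
    linear_combination Dp q (m + 1) * hrec + (1 + q ^ (m + 1)) * (1 - q ^ (m + 2)) * ih
      + (1 - q ^ (m + 2)) * Np q m * hsq


/-! ### Analytic part -/

open Filter Topology

lemma abs_pow_le {q : ℝ} (hq : |q| < 1) {a b : ℕ} (hab : a ≤ b) (ha : a ≠ 0) :
    |q| ^ b ≤ |q| ^ a :=
  pow_le_pow_of_le_one (abs_nonneg q) hq.le hab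

lemma log_bound {q : ℝ} (hq : |q| < 1) {k : ℕ} (hk : k ≠ 0) :
    |Real.log (1 - q ^ k)| ≤ |q| ^ k / (1 - |q|) := by
  have pos : 0 < 1 - q ^ k := one_sub_pow_pos hq k hk
  have h1q : 0 < 1 - |q| := by linarith [hq]
  have hxa : |q ^ k| ≤ |q| := by
    rw [abs_pow]
    calc |q| ^ k ≤ |q| ^ 1 := abs_pow_le hq (Nat.one_le_iff_ne_zero.2 hk) one_ne_zero
      _ = |q| := pow_one _
  have hx1 : q ^ k ≤ |q ^ k| := le_abs_self _
  have hx2 : -|q ^ k| ≤ q ^ k := neg_abs_le _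
  have habs : |q ^ k| = |q| ^ k := abs_pow q k
  have hup : Real.log (1 - q ^ k) ≤ (1 - q ^ k) - 1 := Real.log_le_sub_one_of_pos pos
  have hlo : 1 - (1 - q ^ k)⁻¹ ≤ Real.log (1 - q ^ k) := Real.one_sub_inv_le_log_of_pos pos
  rw [abs_le]
  constructor
  · -- lower bound
    have key : q ^ k / (1 - q ^ k) ≤ |q ^ k| / (1 - |q|) :=
      div_le_div₀ (abs_nonneg _) hx1 h1q (by linarith)
    have hinv : (1 - q ^ k)⁻¹ - 1 = q ^ k / (1 - q ^ k) := by
      field_simp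
      ring
    rw [← habs]
    nlinarith [key, hlo, hinv]
  · -- upper bound
    have h2 : |q ^ k| ≤ |q ^ k| / (1 - |q|) := by
      calc |q ^ k| = |q ^ k| / 1 := (div_one _).symm
        _ ≤ |q ^ k| / (1 - |q|) := div_le_div₀ (abs_nonneg _) le_rfl h1q (by linarith [abs_nonneg q])
    rw [← habs]
    nlinarith [hup, h2]

lemma summable_log_ap {q : ℝ} (hq : |q| < 1) (c : ℕ) (hc : c ≠ 0) :
    Summable (fun j : ℕ => Real.log (1 - q ^ (2 * j + c))) := by
  apply Summable.of_norm_bounded (g := fun j : ℕ => (|q| ^ c / (1 - |q|)) * (|q| ^ 2) ^ j)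
  · apply Summable.mul_left
    exact summable_geometric_of_lt_one (by positivity)
      (by nlinarith [abs_nonneg q, hq])
  · intro j
    have h := log_bound hq (k := 2 * j + c) (by omega)
    rw [Real.norm_eq_abs]
    calc |Real.log (1 - q ^ (2 * j + c))| ≤ |q| ^ (2 * j + c) / (1 - |q|) := h
      _ = |q| ^ c / (1 - |q|) * (|q| ^ 2) ^ j := by
          rw [← pow_mul, pow_add, mul_comm (2:ℕ) j]
          ring
  
lemma hasProd_ap {q : ℝ} (hq : |q| < 1) (c : ℕ) (hc : c ≠ 0) :
    HasProd (fun j : ℕ => 1 - q ^ (2 * j + c)) (∏' j : ℕ, (1 - q ^ (2 * j + c))) := by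
  have := (Real.hasProd_of_hasSum_log (f := fun j : ℕ => 1 - q ^ (2 * j + c))
    (fun j => one_sub_pow_pos hq _ (by omega))
    (summable_log_ap hq c hc).hasSum).multipliable.hasProd
  exact this

lemma tprod_ap_pos {q : ℝ} (hq : |q| < 1) (c : ℕ) (hc : c ≠ 0) :
    0 < ∏' j : ℕ, (1 - q ^ (2 * j + c)) := by
  have h := Real.rexp_tsum_eq_tprod (f := fun j : ℕ => 1 - q ^ (2 * j + c))
    (fun j => one_sub_pow_pos hq _ (by omega))
    (summable_log_ap hq c hc)
  have h2 := h
  rw [← h2]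
  exact Real.exp_pos _


lemma w_abs_le {q : ℝ} (hq : |q| < 1) (m j : ℕ) :
    |w q m j| ≤ (2 / (1 - |q| ^ 2)) ^ j := by
  have hK : 0 < 1 - |q| ^ 2 := by nlinarith [abs_nonneg q]
  rw [w, Finset.abs_prod]
  calc ∏ i ∈ Finset.range j, |(1 - q ^ (m - i)) / (1 - q ^ (m + 2 + i))|
      ≤ ∏ _i ∈ Finset.range j, (2 / (1 - |q| ^ 2)) := by
        refine Finset.prod_le_prod (fun i _ => abs_nonneg _) (fun i _ => ?_)
        rw [abs_div]
        have hnum : |1 - q ^ (m - i)| ≤ 2 := by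
          have h1 : |q ^ (m - i)| ≤ 1 := by
            rw [abs_pow]; exact pow_le_one₀ (abs_nonneg q) hq.le
          calc |1 - q ^ (m - i)| = |1 + -(q ^ (m - i))| := by ring_nf
            _ ≤ |1| + |-(q ^ (m - i))| := abs_add_le _ _
            _ ≤ 1 + 1 := by rw [abs_one, abs_neg]; linarith
            _ = 2 := by norm_num
        have hden : 1 - |q| ^ 2 ≤ |1 - q ^ (m + 2 + i)| := by
          have hp : 0 < 1 - q ^ (m + 2 + i) := one_sub_pow_pos hq _ (by omega)
          rw [abs_of_pos hp]
          have h2 : q ^ (m + 2 + i) ≤ |q| ^ (m + 2 + i) := by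
            rw [← abs_pow]; exact le_abs_self _
          have h3 : |q| ^ (m + 2 + i) ≤ |q| ^ 2 :=
            pow_le_pow_of_le_one (abs_nonneg q) hq.le (by omega)
          linarith
        exact div_le_div₀ (by norm_num) hnum hK hden
    _ = (2 / (1 - |q| ^ 2)) ^ j := by
        rw [Finset.prod_const, Finset.card_range]

noncomputable def F (q : ℝ) (m j : ℕ) : ℝ := if j ≤ m then q ^ T j * w q m j else 0

lemma bound_summable {q : ℝ} (hq : |q| < 1) :
    Summable (fun j : ℕ => (2 / (1 - |q| ^ 2)) ^ j * |q| ^ T j) := by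
  have hK1 : 0 < 1 - |q| ^ 2 := by nlinarith [abs_nonneg q]
  have hK0 : 0 < 2 / (1 - |q| ^ 2) := by positivity
  apply summable_of_ratio_norm_eventually_le (r := 1/2) (by norm_num)
  have htend : Tendsto (fun j : ℕ => 2 / (1 - |q| ^ 2) * |q| ^ (j + 1)) atTop (𝓝 0) := by
    have h0 : Tendsto (fun j : ℕ => |q| ^ (j + 1)) atTop (𝓝 0) :=
      (tendsto_pow_atTop_nhds_zero_of_lt_one (abs_nonneg q) hq).comp (tendsto_add_atTop_nat 1)
    have := h0.const_mul (2 / (1 - |q| ^ 2))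
    simpa using this
  filter_upwards [htend.eventually_le_const (by norm_num : (0:ℝ) < 1/2)] with j hj
  have hnn : ∀ k l : ℕ, (0:ℝ) ≤ (2 / (1 - |q| ^ 2)) ^ k * |q| ^ l := fun k l =>
    mul_nonneg (pow_nonneg hK0.le _) (pow_nonneg (abs_nonneg q) _)
  have e : (2 / (1 - |q| ^ 2)) ^ (j + 1) * |q| ^ T (j + 1)
      = (2 / (1 - |q| ^ 2) * |q| ^ (j + 1)) * ((2 / (1 - |q| ^ 2)) ^ j * |q| ^ T j) := by
    rw [T_succ]
    rw [show (2 / (1 - |q| ^ 2)) ^ (j + 1) = (2 / (1 - |q| ^ 2)) ^ j * (2 / (1 - |q| ^ 2)) from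
      pow_succ _ _]
    rw [show |q| ^ (T j + (j + 1)) = |q| ^ T j * |q| ^ (j + 1) from pow_add _ _ _]
    ring
  rw [Real.norm_eq_abs, Real.norm_eq_abs, abs_of_nonneg (hnn _ _), abs_of_nonneg (hnn _ _), e]
  exact mul_le_mul_of_nonneg_right hj (hnn _ _)

lemma tendsto_w {q : ℝ} (hq : |q| < 1) (j : ℕ) :
    Tendsto (fun m => w q m j) atTop (𝓝 1) := by
  have h1 : (1:ℝ) = ∏ _i ∈ Finset.range j, (1:ℝ) := by simp
  rw [h1]
  apply tendsto_finset_prod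
  intro i _
  have hnum : Tendsto (fun m : ℕ => 1 - q ^ (m - i)) atTop (𝓝 1) := by
    have h := (tendsto_pow_atTop_nhds_zero_of_abs_lt_one hq).comp (tendsto_sub_atTop_nat i)
    have := tendsto_const_nhds (x := (1:ℝ)) (f := atTop (α := ℕ)) |>.sub h
    simpa using this
  have hden : Tendsto (fun m : ℕ => 1 - q ^ (m + 2 + i)) atTop (𝓝 1) := by
    have h := (tendsto_pow_atTop_nhds_zero_of_abs_lt_one hq).comp (tendsto_add_atTop_nat (2 + i))
    have h' : Tendsto (fun m : ℕ => q ^ (m + 2 + i)) atTop (𝓝 0) := by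
      apply h.congr
      intro m
      simp only [Function.comp]
      congr 1
      omega
    have := tendsto_const_nhds (x := (1:ℝ)) (f := atTop (α := ℕ)) |>.sub h'
    simpa using this
  have := hnum.div hden one_ne_zero
  simpa [Pi.div_def] using this

lemma tendsto_A {q : ℝ} (hq : |q| < 1) :
    Tendsto (fun m => A q m) atTop (𝓝 (∑' j : ℕ, q ^ T j)) := by
  have hab : ∀ j : ℕ, Tendsto (fun m => F q m j) atTop (𝓝 (q ^ T j)) := by
    intro j
    have h1 : Tendsto (fun m => q ^ T j * w q m j) atTop (𝓝 (q ^ T j * 1)) :=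
      (tendsto_w hq j).const_mul _
    rw [mul_one] at h1
    apply h1.congr'
    filter_upwards [eventually_ge_atTop j] with m hm
    simp [F, hm]
  have hbound : ∀ m j, ‖F q m j‖ ≤ (2 / (1 - |q| ^ 2)) ^ j * |q| ^ T j := by
    intro m j
    rw [Real.norm_eq_abs]
    unfold F
    have hK1 : 0 < 1 - |q| ^ 2 := by nlinarith [abs_nonneg q]
    have hK0 : (0:ℝ) < 2 / (1 - |q| ^ 2) := by positivity
    split_ifs with h
    · rw [abs_mul, abs_pow]
      rw [mul_comm]
      exact mul_le_mul (w_abs_le hq m j) le_rfl (pow_nonneg (abs_nonneg q) _) (pow_nonneg hK0.le _)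
    · simp only [abs_zero]
      exact mul_nonneg (pow_nonneg hK0.le _) (pow_nonneg (abs_nonneg q) _)
  have key := tendsto_tsum_of_dominated_convergence (𝓕 := atTop)
    (f := fun m j => F q m j) (g := fun j => q ^ T j)
    (bound := fun j => (2 / (1 - |q| ^ 2)) ^ j * |q| ^ T j)
    (bound_summable hq) hab (Filter.Eventually.of_forall (fun m => hbound m))
  apply key.congr
  intro m
  have h0 : ∀ j ∉ Finset.range (m + 1), F q m j = 0 := by
    intro j hj
    have hj' : ¬ (j < m + 1) := fun h => hj (Finset.mem_range.2 h)
    unfold F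
    rw [if_neg (by omega)]
  rw [tsum_eq_sum (s := Finset.range (m + 1)) h0]
  apply Finset.sum_congr rfl
  intro j hj
  have := Finset.mem_range.1 hj
  simp [F, show j ≤ m from by omega]

theorem gauss_identity (q : ℝ) (hq : |q| < 1) :
    (∏' j : ℕ, (1 - q ^ (2 * j + 2))) / (∏' j : ℕ, (1 - q ^ (2 * j + 1))) =
      ∑' j : ℕ, q ^ (j * (j + 1) / 2) := by
  have hN := hasProd_ap hq 2 (by norm_num)
  have hD := hasProd_ap hq 1 one_ne_zero
  have hDpos := tprod_ap_pos hq 1 one_ne_zero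
  set Nv := ∏' j : ℕ, (1 - q ^ (2 * j + 2)) with hNv
  set Dv := ∏' j : ℕ, (1 - q ^ (2 * j + 1)) with hDv
  set S := ∑' j : ℕ, q ^ T j with hS
  have h1 : Tendsto (fun m => A q m * Dp q (m + 1)) atTop (𝓝 (S * Dv)) := by
    apply Tendsto.mul (tendsto_A hq)
    have := (hD.tendsto_prod_nat).comp (tendsto_add_atTop_nat 1)
    apply this.congr
    intro m
    simp [Dp, Function.comp]
  have h2 : Tendsto (fun m => (1 - q ^ (m + 1)) * Np q m) atTop (𝓝 (1 * Nv)) := by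
    apply Tendsto.mul
    · have h := (tendsto_pow_atTop_nhds_zero_of_abs_lt_one hq).comp (tendsto_add_atTop_nat 1)
      have := tendsto_const_nhds (x := (1:ℝ)) (f := atTop (α := ℕ)) |>.sub h
      simpa using this
    · exact hN.tendsto_prod_nat
  have h3 : Tendsto (fun m => A q m * Dp q (m + 1)) atTop (𝓝 (1 * Nv)) := by
    apply h2.congr
    intro m
    exact (A_closed hq m).symm
  have hmain : S * Dv = 1 * Nv := tendsto_nhds_unique h1 h3
  rw [div_eq_iff (ne_of_gt hDpos)]
  show Nv = S * Dv
  rw [hmain, one_mul]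

end GaussAux



namespace Dyson

/-- The rank of a partition: largest part minus number of parts. -/
def rank {n : ℕ} (π : n.Partition) : ℤ :=
  (π.parts.sup : ℤ) - π.parts.card

/-- The Euler product `(q;q)_∞`. -/
noncomputable def euler (q : ℝ) : ℝ := ∏' j : ℕ, (1 - q ^ (j + 1))

/-- `Q_m(q)`: generating function for nonempty partitions of rank ≥ m. -/
noncomputable def Q (q : ℝ) (m : ℤ) : ℝ :=
  ∑' n : ℕ, (Nat.card {π : (n + 1).Partition // m ≤ rank π} : ℝ) * q ^ (n + 1)

noncomputable def qPoch (q : ℝ) (n : ℕ) : ℝ := ∏ j ∈ Finset.range n, (1 - q ^ (j + 1))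

noncomputable def qbinom (q : ℝ) (a b : ℤ) : ℝ :=
  if 0 ≤ b ∧ b ≤ a then qPoch q a.toNat / (qPoch q b.toNat * qPoch q (a - b).toNat) else 0

noncomputable def QL (q : ℝ) (m L : ℤ) : ℝ :=
  ∑' n : ℕ,
    (Nat.card {π : (n + 1).Partition // m ≤ rank π ∧ (π.parts.sup : ℤ) ≤ L} : ℝ) * q ^ (n + 1)

def partAt {n : ℕ} (π : n.Partition) (j : ℕ) : ℕ :=
  ((π.parts.sort (· ≤ ·)).reverse.getD j 0)

def inRankSet {n : ℕ} (π : n.Partition) (k : ℤ) : Prop :=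
  ∃ j : ℕ, (j : ℤ) - partAt π (j + 1) = k

noncomputable def G (q : ℝ) (k : ℤ) : ℝ :=
  ∑' n : ℕ, (Nat.card {π : n.Partition // inRankSet π k} : ℝ) * q ^ n

def crank {n : ℕ} (π : n.Partition) : ℤ :=
  if π.parts.count 1 = 0 then (π.parts.sup : ℤ)
  else ((π.parts.filter (fun p => π.parts.count 1 < p)).card : ℤ) - π.parts.count 1


/-- Gauss: `(q²;q²)_∞ / (q;q²)_∞ = Σ_{j≥0} q^{j(j+1)/2}`. -/
theorem stmt19 (q : ℝ) (hq : |q| < 1) :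
    (∏' j : ℕ, (1 - q ^ (2 * j + 2))) / (∏' j : ℕ, (1 - q ^ (2 * j + 1))) =
      ∑' j : ℕ, q ^ (j * (j + 1) / 2) := GaussAux.gauss_identity q hq

end Dyson
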